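/- Fix N ∈ ℕ. Let Y₀ be a random variable with values in {0,…,N}, independent of (P,R), and let Y₁ be a random variable whose conditional distribution given (Y₀, P, R) = (k, p, r) is that of B₁ + B₂ with B₁, B₂ independent, B₁ ~ Binomial(k, r), B₂ ~ Binomial(N−k, 1−p). Assume Y₁ has the same distribution as Y₀. Write P̄ := 1−P and R̄ := 1−R. Then Var(Y₀) = γ₁N² + γ₂N, where γ₁ = ( E[R̄²](E[P̄])² − 2E[P̄R̄]·E[P̄]·E[R̄] + E[P̄²](E[R̄])² ) / ( (1 − E[(P̄+R̄−1)²]) · (E[P̄] + E[R̄])² ) and γ₂ = ( −E[R̄²]·E[P̄] + 2E[P̄]·E[R̄] − E[P̄²]·E[R̄] ) / ( (1 − E[(P̄+R̄−1)²]) · (E[P̄] + E[R̄]) ); here 1 − E[(P̄+R̄−1)²] > 0 and E[P̄] + E[R̄] > 0 automatically since (P,R) ∈ (0,1)² almost surely. -/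

import Mathlib

open MeasureTheory ProbabilityTheory

noncomputable def binomPMF (n : ℕ) (q : ℝ) (j : ℕ) : ℝ :=
  (n.choose j : ℝ) * q ^ j * (1 - q) ^ (n - j)

noncomputable def convPMF (N k : ℕ) (p r : ℝ) (m : ℕ) : ℝ :=
  ∑ j ∈ Finset.range (m + 1), binomPMF k r j * binomPMF (N - k) (1 - p) (m - j)

lemma sum_choose_mul_pow (n : ℕ) (x y : ℝ) :
    ∑ j ∈ Finset.range (n + 1), (n.choose j : ℝ) * x ^ j * y ^ (n - j) = (x + y) ^ n := by
  rw [add_pow]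
  exact Finset.sum_congr rfl fun j hj => by ring

lemma sum_j_choose (n : ℕ) (x y : ℝ) :
    ∑ j ∈ Finset.range (n + 1), (j : ℝ) * ((n.choose j : ℝ) * x ^ j * y ^ (n - j))
      = n * x * (x + y) ^ (n - 1) := by
  cases n with
  | zero => simp
  | succ n =>
    rw [Finset.sum_range_succ']
    have h : ∀ j ∈ Finset.range (n + 1),
        ((j + 1 : ℕ) : ℝ) * (((n + 1).choose (j + 1) : ℝ) * x ^ (j + 1) * y ^ (n + 1 - (j + 1)))
          = ((n : ℝ) + 1) * x * ((n.choose j : ℝ) * x ^ j * y ^ (n - j)) := by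
      intro j _
      have h0 : ((n + 1) * n.choose j : ℕ) = ((n + 1).choose (j + 1) * (j + 1) : ℕ) :=
        Nat.add_one_mul_choose_eq n j
      have h1 : ((n : ℝ) + 1) * (n.choose j : ℝ) = ((n + 1).choose (j + 1) : ℝ) * ((j : ℝ) + 1) := by
        exact_mod_cast h0
      have h2 : n + 1 - (j + 1) = n - j := by omega
      rw [h2]
      push_cast
      linear_combination (x ^ (j + 1) * y ^ (n - j)) * h1.symm
    rw [Finset.sum_congr rfl h]
    simp only [Nat.cast_zero, zero_mul, add_zero]
    rw [← Finset.mul_sum, sum_choose_mul_pow]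
    push_cast
    ring

lemma sum_j2_choose (n : ℕ) (x y : ℝ) :
    ∑ j ∈ Finset.range (n + 1), (j : ℝ) * ((j : ℝ) - 1) * ((n.choose j : ℝ) * x ^ j * y ^ (n - j))
      = n * (n - 1) * x ^ 2 * (x + y) ^ (n - 2) := by
  match n with
  | 0 => simp
  | 1 => simp [Finset.sum_range_succ]
  | (m + 2) =>
    rw [Finset.sum_range_succ', Finset.sum_range_succ']
    have h : ∀ j ∈ Finset.range (m + 1),
        ((j + 1 + 1 : ℕ) : ℝ) * (((j + 1 + 1 : ℕ) : ℝ) - 1)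
            * (((m + 2).choose (j + 1 + 1) : ℝ) * x ^ (j + 1 + 1) * y ^ (m + 2 - (j + 1 + 1)))
          = ((m : ℝ) + 2) * ((m : ℝ) + 1) * x ^ 2 * ((m.choose j : ℝ) * x ^ j * y ^ (m - j)) := by
      intro j _
      have e1 : ((m + 2) * (m + 1).choose (j + 1) : ℕ) = ((m + 2).choose (j + 2) * (j + 2) : ℕ) :=
        Nat.add_one_mul_choose_eq (m + 1) (j + 1)
      have e2 : ((m + 1) * m.choose j : ℕ) = ((m + 1).choose (j + 1) * (j + 1) : ℕ) :=
        Nat.add_one_mul_choose_eq m j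
      have e1' : ((m : ℝ) + 2) * ((m + 1).choose (j + 1) : ℝ)
          = ((m + 2).choose (j + 2) : ℝ) * ((j : ℝ) + 2) := by exact_mod_cast e1
      have e2' : ((m : ℝ) + 1) * (m.choose j : ℝ)
          = ((m + 1).choose (j + 1) : ℝ) * ((j : ℝ) + 1) := by exact_mod_cast e2
      have h2 : m + 2 - (j + 1 + 1) = m - j := by omega
      rw [h2]
      push_cast
      linear_combination (-(x ^ (j + 2) * y ^ (m - j))) * (((j : ℝ) + 1) * e1' + ((m : ℝ) + 2) * e2')
    rw [Finset.sum_congr rfl h]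
    simp only [Nat.cast_zero, Nat.cast_one, zero_mul, add_zero, sub_self, mul_zero, zero_add]
    rw [← Finset.mul_sum, sum_choose_mul_pow]
    push_cast
    ring

lemma binomPMF_sum (n : ℕ) (q : ℝ) :
    ∑ j ∈ Finset.range (n + 1), binomPMF n q j = 1 := by
  have := sum_choose_mul_pow n q (1 - q)
  simpa [binomPMF] using this

lemma binomPMF_mean (n : ℕ) (q : ℝ) :
    ∑ j ∈ Finset.range (n + 1), (j : ℝ) * binomPMF n q j = n * q := by
  have := sum_j_choose n q (1 - q)
  simp only [binomPMF] at *
  rw [this]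
  norm_num

lemma binomPMF_sq (n : ℕ) (q : ℝ) :
    ∑ j ∈ Finset.range (n + 1), (j : ℝ) ^ 2 * binomPMF n q j
      = (n : ℝ) * ((n : ℝ) - 1) * q ^ 2 + n * q := by
  have h1 := sum_j2_choose n q (1 - q)
  have h2 := sum_j_choose n q (1 - q)
  simp only [add_sub_cancel, one_pow] at h1 h2
  have : ∀ j ∈ Finset.range (n + 1), (j : ℝ) ^ 2 * binomPMF n q j
      = (j : ℝ) * ((j : ℝ) - 1) * ((n.choose j : ℝ) * q ^ j * (1 - q) ^ (n - j))
        + (j : ℝ) * ((n.choose j : ℝ) * q ^ j * (1 - q) ^ (n - j)) := by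
    intro j _; simp only [binomPMF]; ring
  rw [Finset.sum_congr rfl this, Finset.sum_add_distrib, h1, h2]; ring

lemma binomPMF_eq_zero {n j : ℕ} (h : n < j) (q : ℝ) : binomPMF n q j = 0 := by
  simp [binomPMF, Nat.choose_eq_zero_of_lt h]

lemma tri_sum (g : ℕ → ℕ → ℝ) (M : ℕ) :
    ∑ m ∈ Finset.range (M + 1), ∑ j ∈ Finset.range (m + 1), g j (m - j)
      = ∑ j ∈ Finset.range (M + 1), ∑ i ∈ Finset.range (M + 1 - j), g j i := by
  induction M with
  | zero => simp
  | succ M ih =>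
    rw [Finset.sum_range_succ, ih]
    rw [Finset.sum_range_succ (fun j => ∑ i ∈ Finset.range (M + 1 + 1 - j), g j i) (M + 1)]
    have h1 : ∀ j ∈ Finset.range (M + 1), ∑ i ∈ Finset.range (M + 1 + 1 - j), g j i
        = ∑ i ∈ Finset.range (M + 1 - j), g j i + g j (M + 1 - j) := by
      intro j hj
      have hj' : j ≤ M := by simpa [Nat.lt_succ_iff] using hj
      have : M + 1 + 1 - j = (M + 1 - j) + 1 := by omega
      rw [this, Finset.sum_range_succ]
    rw [Finset.sum_congr rfl h1, Finset.sum_add_distrib]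
    rw [Finset.sum_range_succ (fun j => g j (M + 1 - j)) (M + 1)]
    have h3 : M + 1 + 1 - (M + 1) = 1 := by omega
    rw [h3, Finset.sum_range_one, Nat.sub_self]
    ring

lemma conv_sum (N k : ℕ) (hk : k ≤ N) (p r : ℝ) (f : ℕ → ℝ) :
    ∑ m ∈ Finset.range (N + 1), f m * convPMF N k p r m
      = ∑ j ∈ Finset.range (k + 1), ∑ i ∈ Finset.range (N - k + 1),
          f (j + i) * (binomPMF k r j * binomPMF (N - k) (1 - p) i) := by
  have step1 : ∀ m ∈ Finset.range (N + 1), f m * convPMF N k p r m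
      = ∑ j ∈ Finset.range (m + 1),
          (fun j i => f (j + i) * (binomPMF k r j * binomPMF (N - k) (1 - p) i)) j (m - j) := by
    intro m hm
    rw [convPMF, Finset.mul_sum]
    refine Finset.sum_congr rfl fun j hj => ?_
    have hjm : j ≤ m := by simpa [Nat.lt_succ_iff] using hj
    have : j + (m - j) = m := by omega
    simp only [this]
  rw [Finset.sum_congr rfl step1,
    tri_sum (fun j i => f (j + i) * (binomPMF k r j * binomPMF (N - k) (1 - p) i)) N]
  have houter : ∑ j ∈ Finset.range (N + 1), ∑ i ∈ Finset.range (N + 1 - j),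
        f (j + i) * (binomPMF k r j * binomPMF (N - k) (1 - p) i)
      = ∑ j ∈ Finset.range (k + 1), ∑ i ∈ Finset.range (N + 1 - j),
        f (j + i) * (binomPMF k r j * binomPMF (N - k) (1 - p) i) := by
    refine (Finset.sum_subset (Finset.range_subset_range.mpr (by omega)) ?_).symm
    intro j _ hj
    have hkj : k < j := by
      simp only [Finset.mem_range, Nat.lt_succ_iff, not_le] at hj; exact hj
    refine Finset.sum_eq_zero fun i _ => ?_
    rw [binomPMF_eq_zero hkj, zero_mul, mul_zero]
  rw [houter]
  refine Finset.sum_congr rfl fun j hj => ?_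
  have hjk : j ≤ k := by simpa [Nat.lt_succ_iff] using hj
  refine (Finset.sum_subset (Finset.range_subset_range.mpr (by omega)) ?_).symm
  intro i _ hi
  have hNki : N - k < i := by
    simp only [Finset.mem_range, Nat.lt_succ_iff, not_le] at hi; exact hi
  rw [binomPMF_eq_zero hNki, mul_zero, mul_zero]

lemma conv_sum_one {N k : ℕ} (hk : k ≤ N) (p r : ℝ) :
    ∑ m ∈ Finset.range (N + 1), convPMF N k p r m = 1 := by
  have h := conv_sum N k hk p r (fun _ => 1)
  simp only [one_mul] at h
  rw [h]
  have : ∀ j ∈ Finset.range (k + 1), ∑ i ∈ Finset.range (N - k + 1),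
      binomPMF k r j * binomPMF (N - k) (1 - p) i = binomPMF k r j := by
    intro j _
    rw [← Finset.mul_sum, binomPMF_sum, mul_one]
  rw [Finset.sum_congr rfl this, binomPMF_sum]

lemma conv_sum_mean {N k : ℕ} (hk : k ≤ N) (p r : ℝ) :
    ∑ m ∈ Finset.range (N + 1), (m : ℝ) * convPMF N k p r m
      = (k : ℝ) * (r - (1 - p)) + (N : ℝ) * (1 - p) := by
  have h := conv_sum N k hk p r (fun m => (m : ℝ))
  rw [h]
  have hsplit : ∀ j ∈ Finset.range (k + 1), ∑ i ∈ Finset.range (N - k + 1),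
      ((j + i : ℕ) : ℝ) * (binomPMF k r j * binomPMF (N - k) (1 - p) i)
      = (j : ℝ) * binomPMF k r j * 1 + binomPMF k r j * ((N - k : ℕ) : ℝ) * (1 - p) := by
    intro j _
    have : ∀ i ∈ Finset.range (N - k + 1),
        ((j + i : ℕ) : ℝ) * (binomPMF k r j * binomPMF (N - k) (1 - p) i)
        = ((j : ℝ) * binomPMF k r j) * binomPMF (N - k) (1 - p) i
          + binomPMF k r j * ((i : ℝ) * binomPMF (N - k) (1 - p) i) := by
      intro i _; push_cast; ring
    rw [Finset.sum_congr rfl this, Finset.sum_add_distrib, ← Finset.mul_sum, ← Finset.mul_sum,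
      binomPMF_sum, binomPMF_mean]
    ring
  rw [Finset.sum_congr rfl hsplit, Finset.sum_add_distrib]
  have h1 : ∀ j ∈ Finset.range (k+1), (j:ℝ) * binomPMF k r j * 1 = (j:ℝ) * binomPMF k r j := by
    intro j _; ring
  rw [Finset.sum_congr rfl h1, binomPMF_mean]
  have h2 : ∑ j ∈ Finset.range (k+1), binomPMF k r j * ((N - k : ℕ) : ℝ) * (1 - p)
      = (∑ j ∈ Finset.range (k+1), binomPMF k r j) * (((N - k : ℕ) : ℝ) * (1 - p)) := by
    rw [Finset.sum_mul]
    exact Finset.sum_congr rfl fun j _ => by ring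
  rw [h2, binomPMF_sum, Nat.cast_sub hk]
  ring

lemma conv_sum_sq {N k : ℕ} (hk : k ≤ N) (p r : ℝ) :
    ∑ m ∈ Finset.range (N + 1), (m : ℝ) ^ 2 * convPMF N k p r m
      = (k : ℝ) ^ 2 * (r - (1 - p)) ^ 2
        + (k : ℝ) * (2 * (N : ℝ) * (1 - p) * (r - (1 - p)) + r * (1 - r) - (1 - p) * p)
        + (N : ℝ) ^ 2 * (1 - p) ^ 2 + (N : ℝ) * (1 - p) * p := by
  have h := conv_sum N k hk p r (fun m => (m : ℝ) ^ 2)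
  rw [h]
  have hsplit : ∀ j ∈ Finset.range (k + 1), ∑ i ∈ Finset.range (N - k + 1),
      ((j + i : ℕ) : ℝ) ^ 2 * (binomPMF k r j * binomPMF (N - k) (1 - p) i)
      = (j : ℝ) ^ 2 * binomPMF k r j
        + 2 * ((j : ℝ) * binomPMF k r j) * (((N - k : ℕ) : ℝ) * (1 - p))
        + binomPMF k r j * (((N - k : ℕ) : ℝ) * (((N - k : ℕ) : ℝ) - 1) * (1 - p) ^ 2
            + ((N - k : ℕ) : ℝ) * (1 - p)) := by
    intro j _
    have : ∀ i ∈ Finset.range (N - k + 1),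
        ((j + i : ℕ) : ℝ) ^ 2 * (binomPMF k r j * binomPMF (N - k) (1 - p) i)
        = ((j : ℝ) ^ 2 * binomPMF k r j) * binomPMF (N - k) (1 - p) i
          + (2 * ((j : ℝ) * binomPMF k r j)) * ((i : ℝ) * binomPMF (N - k) (1 - p) i)
          + binomPMF k r j * ((i : ℝ) ^ 2 * binomPMF (N - k) (1 - p) i) := by
      intro i _; push_cast; ring
    rw [Finset.sum_congr rfl this, Finset.sum_add_distrib, Finset.sum_add_distrib,
      ← Finset.mul_sum, ← Finset.mul_sum, ← Finset.mul_sum,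
      binomPMF_sum, binomPMF_mean, binomPMF_sq]
    ring
  rw [Finset.sum_congr rfl hsplit, Finset.sum_add_distrib, Finset.sum_add_distrib]
  have e1 : ∑ j ∈ Finset.range (k+1), 2 * ((j:ℝ) * binomPMF k r j) * (((N - k : ℕ) : ℝ) * (1 - p))
      = 2 * ((k:ℝ) * r) * (((N - k : ℕ) : ℝ) * (1 - p)) := by
    have : ∑ j ∈ Finset.range (k+1), 2 * ((j:ℝ) * binomPMF k r j) * (((N - k : ℕ) : ℝ) * (1 - p))
        = (∑ j ∈ Finset.range (k+1), (j:ℝ) * binomPMF k r j) * (2 * (((N - k : ℕ) : ℝ) * (1 - p))) := by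
      rw [Finset.sum_mul]; exact Finset.sum_congr rfl fun j _ => by ring
    rw [this, binomPMF_mean]; ring
  have e2 : ∑ j ∈ Finset.range (k+1), binomPMF k r j * (((N - k : ℕ) : ℝ) * (((N - k : ℕ) : ℝ) - 1) * (1 - p) ^ 2
            + ((N - k : ℕ) : ℝ) * (1 - p))
      = ((N - k : ℕ) : ℝ) * (((N - k : ℕ) : ℝ) - 1) * (1 - p) ^ 2 + ((N - k : ℕ) : ℝ) * (1 - p) := by
    rw [← Finset.sum_mul, binomPMF_sum, one_mul]
  rw [e1, e2, binomPMF_sq, Nat.cast_sub hk]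
  ring

lemma binomPMF_nonneg {n j : ℕ} {q : ℝ} (h0 : 0 ≤ q) (h1 : q ≤ 1) : 0 ≤ binomPMF n q j := by
  unfold binomPMF
  have : (0:ℝ) ≤ 1 - q := by linarith
  positivity

lemma binomPMF_le_one {n j : ℕ} {q : ℝ} (h0 : 0 ≤ q) (h1 : q ≤ 1) : binomPMF n q j ≤ 1 := by
  rcases le_or_gt j n with hj | hj
  · calc binomPMF n q j ≤ ∑ i ∈ Finset.range (n + 1), binomPMF n q i :=
        Finset.single_le_sum (f := fun i => binomPMF n q i)
          (fun i _ => binomPMF_nonneg h0 h1) (Finset.mem_range.mpr (Nat.lt_succ_of_le hj))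
    _ = 1 := binomPMF_sum n q
  · rw [binomPMF_eq_zero hj]; norm_num

lemma convPMF_bound {p r : ℝ} (hp0 : 0 ≤ p) (hp1 : p ≤ 1) (hr0 : 0 ≤ r) (hr1 : r ≤ 1)
    (N k m : ℕ) : |convPMF N k p r m| ≤ (m : ℝ) + 1 := by
  have h1p0 : (0:ℝ) ≤ 1 - p := by linarith
  have h1p1 : (1:ℝ) - p ≤ 1 := by linarith
  have hnn : 0 ≤ convPMF N k p r m :=
    Finset.sum_nonneg fun j _ => mul_nonneg (binomPMF_nonneg hr0 hr1) (binomPMF_nonneg h1p0 h1p1)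
  rw [abs_of_nonneg hnn]
  calc convPMF N k p r m ≤ ∑ j ∈ Finset.range (m + 1), 1 := by
        refine Finset.sum_le_sum fun j _ => ?_
        exact mul_le_one₀ (binomPMF_le_one hr0 hr1) (binomPMF_nonneg h1p0 h1p1)
          (binomPMF_le_one h1p0 h1p1)
    _ = (m : ℝ) + 1 := by simp

set_option maxHeartbeats 1000000 in
/-- In the stationary resampling model, with `P̄ := 1 − P` and `R̄ := 1 − R`,
`Var(Y₀) = γ₁N² + γ₂N` with the stated coefficients `γ₁, γ₂`; moreover
`1 − E[(P̄ + R̄ − 1)²] > 0` and `E[P̄] + E[R̄] > 0`. -/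
theorem stmt_17
    {Ω : Type*} [MeasurableSpace Ω] (μ : Measure Ω) [IsProbabilityMeasure μ]
    (P R : Ω → ℝ) (hP : Measurable P) (hR : Measurable R)
    (hPR : ∀ᵐ ω ∂μ, P ω ∈ Set.Ioo (0 : ℝ) 1 ∧ R ω ∈ Set.Ioo (0 : ℝ) 1)
    (N : ℕ) (Y₀ Y₁ : Ω → ℕ) (hY₀ : Measurable Y₀) (hY₁ : Measurable Y₁)
    (hY₀N : ∀ ω, Y₀ ω ≤ N)
    (hindep : IndepFun Y₀ (fun ω => (P ω, R ω)) μ)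
    (hcond : ∀ (m : ℕ) (s : Set (ℕ × ℝ × ℝ)), MeasurableSet s →
      (μ {ω | Y₁ ω = m ∧ (Y₀ ω, P ω, R ω) ∈ s}).toReal
        = ∫ ω in {ω | (Y₀ ω, P ω, R ω) ∈ s}, convPMF N (Y₀ ω) (P ω) (R ω) m ∂μ)
    (hstat : Measure.map Y₁ μ = Measure.map Y₀ μ) :
    0 < 1 - ∫ ω, ((1 - P ω) + (1 - R ω) - 1) ^ 2 ∂μ ∧
    0 < (∫ ω, (1 - P ω) ∂μ) + ∫ ω, (1 - R ω) ∂μ ∧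
    variance (fun ω => (Y₀ ω : ℝ)) μ
      = (((∫ ω, (1 - R ω) ^ 2 ∂μ) * (∫ ω, (1 - P ω) ∂μ) ^ 2
            - 2 * (∫ ω, (1 - P ω) * (1 - R ω) ∂μ) * (∫ ω, (1 - P ω) ∂μ) * (∫ ω, (1 - R ω) ∂μ)
            + (∫ ω, (1 - P ω) ^ 2 ∂μ) * (∫ ω, (1 - R ω) ∂μ) ^ 2)
          / ((1 - ∫ ω, ((1 - P ω) + (1 - R ω) - 1) ^ 2 ∂μ)
              * ((∫ ω, (1 - P ω) ∂μ) + ∫ ω, (1 - R ω) ∂μ) ^ 2)) * (N : ℝ) ^ 2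
        + ((-(∫ ω, (1 - R ω) ^ 2 ∂μ) * (∫ ω, (1 - P ω) ∂μ)
              + 2 * (∫ ω, (1 - P ω) ∂μ) * (∫ ω, (1 - R ω) ∂μ)
              - (∫ ω, (1 - P ω) ^ 2 ∂μ) * (∫ ω, (1 - R ω) ∂μ))
            / ((1 - ∫ ω, ((1 - P ω) + (1 - R ω) - 1) ^ 2 ∂μ)
                * ((∫ ω, (1 - P ω) ∂μ) + ∫ ω, (1 - R ω) ∂μ))) * (N : ℝ) := by
  classical
  -- a.e. bounds
  have hae : ∀ᵐ ω ∂μ, 0 < P ω ∧ P ω < 1 ∧ 0 < R ω ∧ R ω < 1 := by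
    filter_upwards [hPR] with ω h
    exact ⟨h.1.1, h.1.2, h.2.1, h.2.2⟩
  -- integrability helper
  have hint : ∀ (f : Ω → ℝ) (C : ℝ), Measurable f → (∀ᵐ ω ∂μ, |f ω| ≤ C) → Integrable f μ := by
    intro f C hf hb
    exact (integrable_const C).mono' hf.aestronglyMeasurable
      (by filter_upwards [hb] with ω h; simpa [Real.norm_eq_abs] using h)
  have hmeasY : ∀ g : ℕ → ℝ, Measurable fun ω => g (Y₀ ω) :=
    fun g => measurable_from_top.comp hY₀
  have hmeasYn : ∀ g : ℕ → ℕ, Measurable fun ω => g (Y₀ ω) :=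
    fun g => measurable_from_top.comp hY₀
  -- basic integrable functions
  have h1P : Integrable (fun ω => 1 - P ω) μ :=
    hint _ 1 (measurable_const.sub hP)
      (by filter_upwards [hae] with ω h; rw [abs_le]; constructor <;> [linarith [h.2.1]; linarith [h.1]])
  have h1R : Integrable (fun ω => 1 - R ω) μ :=
    hint _ 1 (measurable_const.sub hR)
      (by filter_upwards [hae] with ω h; rw [abs_le]; constructor <;> [linarith [h.2.2.2]; linarith [h.2.2.1]])
  have h1P2 : Integrable (fun ω => (1 - P ω) ^ 2) μ :=
    hint _ 1 ((measurable_const.sub hP).pow measurable_const)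
      (by filter_upwards [hae] with ω h; rw [abs_le]; constructor <;> nlinarith [h.1, h.2.1])
  have h1R2 : Integrable (fun ω => (1 - R ω) ^ 2) μ :=
    hint _ 1 ((measurable_const.sub hR).pow measurable_const)
      (by filter_upwards [hae] with ω h; rw [abs_le]; constructor <;> nlinarith [h.2.2.1, h.2.2.2])
  have h1PR : Integrable (fun ω => (1 - P ω) * (1 - R ω)) μ :=
    hint _ 1 ((measurable_const.sub hP).mul (measurable_const.sub hR))
      (by filter_upwards [hae] with ω h; rw [abs_le]; constructor <;> nlinarith [h.1, h.2.1, h.2.2.1, h.2.2.2])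
  -- canonical linear-combination integrals
  have hcanon : ∀ (f : Ω → ℝ) (c0 c1 c2 c3 c4 c5 : ℝ),
      (∀ ω, f ω = c0 + c1 * (1 - P ω) + c2 * (1 - R ω) + c3 * (1 - P ω) ^ 2
        + c4 * (1 - R ω) ^ 2 + c5 * ((1 - P ω) * (1 - R ω))) →
      ∫ ω, f ω ∂μ = c0 + c1 * (∫ ω, (1 - P ω) ∂μ) + c2 * (∫ ω, (1 - R ω) ∂μ)
        + c3 * (∫ ω, (1 - P ω) ^ 2 ∂μ) + c4 * (∫ ω, (1 - R ω) ^ 2 ∂μ)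
        + c5 * (∫ ω, (1 - P ω) * (1 - R ω) ∂μ) := by
    intro f c0 c1 c2 c3 c4 c5 hf
    rw [integral_congr_ae (Filter.Eventually.of_forall hf)]
    have i1 : Integrable (fun ω => c1 * (1 - P ω)) μ := h1P.const_mul c1
    have i2 : Integrable (fun ω => c2 * (1 - R ω)) μ := h1R.const_mul c2
    have i3 : Integrable (fun ω => c3 * (1 - P ω) ^ 2) μ := h1P2.const_mul c3
    have i4 : Integrable (fun ω => c4 * (1 - R ω) ^ 2) μ := h1R2.const_mul c4
    have i5 : Integrable (fun ω => c5 * ((1 - P ω) * (1 - R ω))) μ := h1PR.const_mul c5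
    have j1 : Integrable (fun ω => c0 + c1 * (1 - P ω)) μ := (integrable_const c0).add i1
    have j2 : Integrable (fun ω => c0 + c1 * (1 - P ω) + c2 * (1 - R ω)) μ := j1.add i2
    have j3 : Integrable (fun ω => c0 + c1 * (1 - P ω) + c2 * (1 - R ω) + c3 * (1 - P ω) ^ 2) μ :=
      j2.add i3
    have j4 : Integrable (fun ω => c0 + c1 * (1 - P ω) + c2 * (1 - R ω) + c3 * (1 - P ω) ^ 2
        + c4 * (1 - R ω) ^ 2) μ := j3.add i4
    have e5 : ∫ ω, (c0 + c1 * (1 - P ω) + c2 * (1 - R ω) + c3 * (1 - P ω) ^ 2 + c4 * (1 - R ω) ^ 2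
          + c5 * ((1 - P ω) * (1 - R ω))) ∂μ
        = (∫ ω, (c0 + c1 * (1 - P ω) + c2 * (1 - R ω) + c3 * (1 - P ω) ^ 2 + c4 * (1 - R ω) ^ 2) ∂μ)
          + ∫ ω, c5 * ((1 - P ω) * (1 - R ω)) ∂μ := integral_add j4 i5
    have e4 : ∫ ω, (c0 + c1 * (1 - P ω) + c2 * (1 - R ω) + c3 * (1 - P ω) ^ 2 + c4 * (1 - R ω) ^ 2) ∂μ
        = (∫ ω, (c0 + c1 * (1 - P ω) + c2 * (1 - R ω) + c3 * (1 - P ω) ^ 2) ∂μ)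
          + ∫ ω, c4 * (1 - R ω) ^ 2 ∂μ := integral_add j3 i4
    have e3 : ∫ ω, (c0 + c1 * (1 - P ω) + c2 * (1 - R ω) + c3 * (1 - P ω) ^ 2) ∂μ
        = (∫ ω, (c0 + c1 * (1 - P ω) + c2 * (1 - R ω)) ∂μ)
          + ∫ ω, c3 * (1 - P ω) ^ 2 ∂μ := integral_add j2 i3
    have e2 : ∫ ω, (c0 + c1 * (1 - P ω) + c2 * (1 - R ω)) ∂μ
        = (∫ ω, (c0 + c1 * (1 - P ω)) ∂μ) + ∫ ω, c2 * (1 - R ω) ∂μ := integral_add j1 i2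
    have e1 : ∫ ω, (c0 + c1 * (1 - P ω)) ∂μ
        = (∫ ω, (c0 : ℝ) ∂μ) + ∫ ω, c1 * (1 - P ω) ∂μ := integral_add (integrable_const c0) i1
    rw [e5, e4, e3, e2, e1, integral_const, integral_const_mul, integral_const_mul,
      integral_const_mul, integral_const_mul, integral_const_mul]
    simp [measure_univ]
  -- independence splitting
  have hsplit : ∀ (g : ℕ → ℝ) (h : ℝ × ℝ → ℝ), Measurable h →
      ∫ ω, g (Y₀ ω) * h (P ω, R ω) ∂μ
        = (∫ ω, g (Y₀ ω) ∂μ) * ∫ ω, h (P ω, R ω) ∂μ := by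
    intro g h hh
    have hi := (hindep.comp (measurable_from_top : Measurable g) hh).integral_mul_eq_mul_integral
      ((hmeasY g).aestronglyMeasurable) ((hh.comp (hP.prodMk hR)).aestronglyMeasurable)
    simpa [Function.comp] using hi
  -- measurability of the conv pmf composed
  have hconvMeas : ∀ m, Measurable fun ω => convPMF N (Y₀ ω) (P ω) (R ω) m := by
    intro m
    simp only [convPMF, binomPMF]
    apply Finset.measurable_sum
    intro j _
    refine Measurable.mul ?_ ?_
    · exact ((hmeasY fun k => (k.choose j : ℝ)).mul (hR.pow measurable_const)).mul
        ((measurable_const.sub hR).pow (hmeasYn fun k => k - j))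
    · exact ((hmeasY fun k => ((N - k).choose (m - j) : ℝ)).mul
        ((measurable_const.sub hP).pow measurable_const)).mul
        ((measurable_const.sub (measurable_const.sub hP)).pow (hmeasYn fun k => N - k - (m - j)))
  -- representation of moments of bounded ℕ-valued r.v.s
  have rep : ∀ (Z : Ω → ℕ), Measurable Z → (∀ᵐ ω ∂μ, Z ω ≤ N) → ∀ f : ℕ → ℝ,
      ∫ ω, f (Z ω) ∂μ = ∑ m ∈ Finset.range (N + 1), f m * (μ {ω | Z ω = m}).toReal := by
    intro Z hZ hZN f
    have hZm : ∀ m : ℕ, MeasurableSet {ω | Z ω = m} := fun m => hZ (measurableSet_singleton m)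
    have h1 : ∫ ω, f (Z ω) ∂μ
        = ∫ ω, (∑ m ∈ Finset.range (N + 1), Set.indicator {ω' | Z ω' = m} (fun _ => f m) ω) ∂μ := by
      refine integral_congr_ae ?_
      filter_upwards [hZN] with ω hω
      rw [Finset.sum_eq_single (Z ω)]
      · rw [Set.indicator_of_mem (by exact rfl)]
      · intro m _ hm
        exact Set.indicator_of_notMem (fun h => hm ((show Z ω = m from h) ▸ rfl)) _
      · intro h
        exact absurd (Finset.mem_range.mpr (Nat.lt_succ_of_le hω)) h
    rw [h1, integral_finset_sum _ (fun m _ => (integrable_const (f m)).indicator (hZm m))]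
    refine Finset.sum_congr rfl fun m _ => ?_
    rw [integral_indicator_const (f m) (hZm m)]
    simp [mul_comm, Measure.real]
  -- Y₁ ≤ N almost surely
  have hY1N : ∀ᵐ ω ∂μ, Y₁ ω ≤ N := by
    have h2 : (Y₀ ⁻¹' {n | N < n}) = (∅ : Set Ω) :=
      Set.eq_empty_iff_forall_notMem.mpr fun ω hω => absurd hω (not_lt.mpr (hY₀N ω))
    have h0 : μ {ω | ¬ Y₁ ω ≤ N} = 0 := by
      have h1 : {ω | ¬ Y₁ ω ≤ N} = Y₁ ⁻¹' {n | N < n} := by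
        ext ω; simp [not_le]
      rw [h1, ← Measure.map_apply hY₁ (by trivial : MeasurableSet {n | N < n}), hstat,
        Measure.map_apply hY₀ (by trivial : MeasurableSet {n | N < n}), h2]
      simp
    exact ae_iff.mpr h0
  -- equal one-dimensional laws
  have hlaw : ∀ m : ℕ, μ {ω | Y₁ ω = m} = μ {ω | Y₀ ω = m} := by
    intro m
    have h1 := Measure.map_apply (μ := μ) hY₁ (measurableSet_singleton m)
    have h2 := Measure.map_apply (μ := μ) hY₀ (measurableSet_singleton m)
    rw [hstat] at h1
    exact h1.symm.trans h2
  -- conditional pmf identity with s = univ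
  have hmuY1 : ∀ m, (μ {ω | Y₁ ω = m}).toReal = ∫ ω, convPMF N (Y₀ ω) (P ω) (R ω) m ∂μ := by
    intro m
    have h := hcond m Set.univ MeasurableSet.univ
    simpa using h
  have hconvInt : ∀ m, Integrable (fun ω => convPMF N (Y₀ ω) (P ω) (R ω) m) μ := by
    intro m
    refine hint _ ((m : ℝ) + 1) (hconvMeas m) ?_
    filter_upwards [hae] with ω h
    exact convPMF_bound h.1.le h.2.1.le h.2.2.1.le h.2.2.2.le N (Y₀ ω) m
  have hmom : ∀ f : ℕ → ℝ, ∫ ω, f (Y₁ ω) ∂μ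
      = ∫ ω, (∑ m ∈ Finset.range (N + 1), f m * convPMF N (Y₀ ω) (P ω) (R ω) m) ∂μ := by
    intro f
    rw [rep Y₁ hY₁ hY1N f]
    have h1 : ∀ m ∈ Finset.range (N + 1), f m * (μ {ω | Y₁ ω = m}).toReal
        = ∫ ω, f m * convPMF N (Y₀ ω) (P ω) (R ω) m ∂μ := by
      intro m _
      rw [hmuY1 m]
      exact (integral_const_mul _ _).symm
    rw [Finset.sum_congr rfl h1,
      ← integral_finset_sum _ (fun m _ => (hconvInt m).const_mul (f m))]
  have hsame : ∀ f : ℕ → ℝ, ∫ ω, f (Y₁ ω) ∂μ = ∫ ω, f (Y₀ ω) ∂μ := by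
    intro f
    rw [rep Y₁ hY₁ hY1N f, rep Y₀ hY₀ (Filter.Eventually.of_forall hY₀N) f]
    exact Finset.sum_congr rfl fun m _ => by rw [hlaw m]
  -- various bounds
  have hYcast : ∀ ω, |(Y₀ ω : ℝ)| ≤ (N : ℝ) := fun ω => by
    rw [abs_of_nonneg (Nat.cast_nonneg _)]; exact_mod_cast hY₀N ω
  have hWb : ∀ᵐ ω ∂μ, |R ω - (1 - P ω)| ≤ 1 := by
    filter_upwards [hae] with ω h
    rw [abs_le]
    constructor
    · linarith [h.1, h.2.2.1]
    · linarith [h.2.1, h.2.2.2]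
  have hWmeas : Measurable (fun ω => R ω - (1 - P ω)) := hR.sub (measurable_const.sub hP)
  have hIA1 : Integrable (fun ω => (Y₀ ω : ℝ) * (R ω - (1 - P ω))) μ := by
    refine hint _ ((N : ℝ) * 1) ((hmeasY fun k => (k : ℝ)).mul hWmeas) ?_
    filter_upwards [hWb] with ω h
    rw [abs_mul]
    exact mul_le_mul (hYcast ω) h (abs_nonneg _) (Nat.cast_nonneg _)
  have hIA2 : Integrable (fun ω => (N : ℝ) * (1 - P ω)) μ := h1P.const_mul _
  -- first moment equation
  have hE1 : ∫ ω, (Y₀ ω : ℝ) ∂μ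
      = (∫ ω, (Y₀ ω : ℝ) ∂μ) * (1 - (∫ ω, (1 - P ω) ∂μ) - (∫ ω, (1 - R ω) ∂μ))
        + (N : ℝ) * ∫ ω, (1 - P ω) ∂μ := by
    have h2 := hmom (fun m => (m : ℝ))
    rw [hsame (fun m => (m : ℝ))] at h2
    have h3 : ∫ ω, (∑ m ∈ Finset.range (N + 1), (m : ℝ) * convPMF N (Y₀ ω) (P ω) (R ω) m) ∂μ
        = ∫ ω, ((Y₀ ω : ℝ) * (R ω - (1 - P ω)) + (N : ℝ) * (1 - P ω)) ∂μ :=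
      integral_congr_ae (Filter.Eventually.of_forall fun ω => conv_sum_mean (hY₀N ω) (P ω) (R ω))
    have h4 : ∫ ω, (Y₀ ω : ℝ) * (R ω - (1 - P ω)) ∂μ
        = (∫ ω, (Y₀ ω : ℝ) ∂μ) * ∫ ω, (R ω - (1 - P ω)) ∂μ := by
      have := hsplit (fun m => (m : ℝ)) (fun x => x.2 - (1 - x.1))
        (measurable_snd.sub (measurable_const.sub measurable_fst))
      simpa using this
    have h5 : ∫ ω, (R ω - (1 - P ω)) ∂μ
        = 1 + (-1) * (∫ ω, (1 - P ω) ∂μ) + (-1) * (∫ ω, (1 - R ω) ∂μ)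
          + 0 * (∫ ω, (1 - P ω) ^ 2 ∂μ) + 0 * (∫ ω, (1 - R ω) ^ 2 ∂μ)
          + 0 * (∫ ω, (1 - P ω) * (1 - R ω) ∂μ) :=
      hcanon _ 1 (-1) (-1) 0 0 0 (fun ω => by ring)
    rw [h3, integral_add hIA1 hIA2, integral_const_mul, h4, h5] at h2
    linear_combination h2
  -- second moment pieces
  have hIB1 : Integrable (fun ω => (Y₀ ω : ℝ) ^ 2 * (R ω - (1 - P ω)) ^ 2) μ := by
    refine hint _ ((N : ℝ) ^ 2 * 1) (((hmeasY fun k => (k : ℝ)).pow measurable_const).mul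
      (hWmeas.pow measurable_const)) ?_
    filter_upwards [hWb] with ω h
    rw [abs_mul, abs_pow, abs_pow]
    have h1 : |(Y₀ ω : ℝ)| ^ 2 ≤ (N : ℝ) ^ 2 := pow_le_pow_left₀ (abs_nonneg _) (hYcast ω) 2
    have h2 : |R ω - (1 - P ω)| ^ 2 ≤ 1 := by nlinarith [abs_nonneg (R ω - (1 - P ω))]
    exact mul_le_mul h1 h2 (by positivity) (by positivity)
  have hUmeas : Measurable (fun ω =>
      2 * (N : ℝ) * (1 - P ω) * (R ω - (1 - P ω)) + R ω * (1 - R ω) - (1 - P ω) * P ω) :=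
    (((measurable_const.mul (measurable_const.sub hP)).mul hWmeas).add
      (hR.mul (measurable_const.sub hR))).sub ((measurable_const.sub hP).mul hP)
  have hUb : ∀ᵐ ω ∂μ, |2 * (N : ℝ) * (1 - P ω) * (R ω - (1 - P ω)) + R ω * (1 - R ω)
      - (1 - P ω) * P ω| ≤ 2 * (N : ℝ) + 2 := by
    filter_upwards [hae] with ω h
    obtain ⟨hp0, hp1, hr0, hr1⟩ := h
    have hN0 : (0 : ℝ) ≤ (N : ℝ) := Nat.cast_nonneg N
    have hW1 : (0 : ℝ) ≤ 1 - (1 - P ω) * (R ω - (1 - P ω)) := by nlinarith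
    have hW2 : (0 : ℝ) ≤ 1 + (1 - P ω) * (R ω - (1 - P ω)) := by nlinarith
    have ht1 : (0 : ℝ) ≤ (N : ℝ) * (1 - (1 - P ω) * (R ω - (1 - P ω))) := mul_nonneg hN0 hW1
    have ht2 : (0 : ℝ) ≤ (N : ℝ) * (1 + (1 - P ω) * (R ω - (1 - P ω))) := mul_nonneg hN0 hW2
    have hr2 : R ω * (1 - R ω) ≤ 1 := by nlinarith
    have hr3 : 0 ≤ R ω * (1 - R ω) := by nlinarith
    have hqp1 : (1 - P ω) * P ω ≤ 1 := by nlinarith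
    have hqp0 : 0 ≤ (1 - P ω) * P ω := by nlinarith
    rw [abs_le]
    constructor
    · nlinarith [ht2]
    · nlinarith [ht1]
  have hIB2 : Integrable (fun ω => (Y₀ ω : ℝ) * (2 * (N : ℝ) * (1 - P ω) * (R ω - (1 - P ω))
      + R ω * (1 - R ω) - (1 - P ω) * P ω)) μ := by
    refine hint _ ((N : ℝ) * (2 * (N : ℝ) + 2)) ((hmeasY fun k => (k : ℝ)).mul hUmeas) ?_
    filter_upwards [hUb] with ω h
    rw [abs_mul]
    exact mul_le_mul (hYcast ω) h (abs_nonneg _) (Nat.cast_nonneg _)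
  have hIB3 : Integrable (fun ω => (N : ℝ) ^ 2 * (1 - P ω) ^ 2 + (N : ℝ) * (1 - P ω) * P ω) μ := by
    refine (h1P2.const_mul _).add (hint _ (N : ℝ) ((measurable_const.mul
      (measurable_const.sub hP)).mul hP) ?_)
    filter_upwards [hae] with ω h
    obtain ⟨hp0, hp1, _, _⟩ := h
    have hN0 : (0 : ℝ) ≤ (N : ℝ) := Nat.cast_nonneg N
    have h1 : 0 ≤ (N : ℝ) * (1 - P ω) * P ω :=
      mul_nonneg (mul_nonneg hN0 (by linarith)) hp0.le
    rw [abs_of_nonneg h1]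
    nlinarith [mul_nonneg hN0 (by nlinarith : (0:ℝ) ≤ 1 - (1 - P ω) * P ω)]
  -- second moment equation
  have hE2 : ∫ ω, (Y₀ ω : ℝ) ^ 2 ∂μ
      = (∫ ω, (Y₀ ω : ℝ) ^ 2 ∂μ) * (∫ ω, ((1 - P ω) + (1 - R ω) - 1) ^ 2 ∂μ)
        + (∫ ω, (Y₀ ω : ℝ) ∂μ) * (0 + (2 * (N : ℝ) - 1) * (∫ ω, (1 - P ω) ∂μ)
            + 1 * (∫ ω, (1 - R ω) ∂μ) + (1 - 2 * (N : ℝ)) * (∫ ω, (1 - P ω) ^ 2 ∂μ)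
            + (-1) * (∫ ω, (1 - R ω) ^ 2 ∂μ)
            + (-(2 * (N : ℝ))) * (∫ ω, (1 - P ω) * (1 - R ω) ∂μ))
        + (0 + (N : ℝ) * (∫ ω, (1 - P ω) ∂μ) + 0 * (∫ ω, (1 - R ω) ∂μ)
            + ((N : ℝ) ^ 2 - (N : ℝ)) * (∫ ω, (1 - P ω) ^ 2 ∂μ)
            + 0 * (∫ ω, (1 - R ω) ^ 2 ∂μ) + 0 * (∫ ω, (1 - P ω) * (1 - R ω) ∂μ)) := by
    have h2 := hmom (fun m => (m : ℝ) ^ 2)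
    rw [hsame (fun m => (m : ℝ) ^ 2)] at h2
    have h3 : ∫ ω, (∑ m ∈ Finset.range (N + 1), (m : ℝ) ^ 2 * convPMF N (Y₀ ω) (P ω) (R ω) m) ∂μ
        = ∫ ω, ((Y₀ ω : ℝ) ^ 2 * (R ω - (1 - P ω)) ^ 2
            + (Y₀ ω : ℝ) * (2 * (N : ℝ) * (1 - P ω) * (R ω - (1 - P ω)) + R ω * (1 - R ω)
              - (1 - P ω) * P ω)
            + ((N : ℝ) ^ 2 * (1 - P ω) ^ 2 + (N : ℝ) * (1 - P ω) * P ω)) ∂μ :=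
      integral_congr_ae (Filter.Eventually.of_forall fun ω =>
        (conv_sum_sq (hY₀N ω) (P ω) (R ω)).trans (by ring))
    have p1 : ∫ ω, (Y₀ ω : ℝ) ^ 2 * (R ω - (1 - P ω)) ^ 2 ∂μ
        = (∫ ω, (Y₀ ω : ℝ) ^ 2 ∂μ) * ∫ ω, (R ω - (1 - P ω)) ^ 2 ∂μ := by
      have := hsplit (fun m => (m : ℝ) ^ 2) (fun x => (x.2 - (1 - x.1)) ^ 2)
        ((measurable_snd.sub (measurable_const.sub measurable_fst)).pow measurable_const)
      simpa using this
    have p1' : ∫ ω, (R ω - (1 - P ω)) ^ 2 ∂μ = ∫ ω, ((1 - P ω) + (1 - R ω) - 1) ^ 2 ∂μ :=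
      integral_congr_ae (Filter.Eventually.of_forall fun ω => by ring)
    have p2 : ∫ ω, (Y₀ ω : ℝ) * (2 * (N : ℝ) * (1 - P ω) * (R ω - (1 - P ω)) + R ω * (1 - R ω)
          - (1 - P ω) * P ω) ∂μ
        = (∫ ω, (Y₀ ω : ℝ) ∂μ) * ∫ ω, (2 * (N : ℝ) * (1 - P ω) * (R ω - (1 - P ω))
            + R ω * (1 - R ω) - (1 - P ω) * P ω) ∂μ := by
      have := hsplit (fun m => (m : ℝ)) (fun x => 2 * (N : ℝ) * (1 - x.1) * (x.2 - (1 - x.1))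
          + x.2 * (1 - x.2) - (1 - x.1) * x.1)
        ((((measurable_const.mul (measurable_const.sub measurable_fst)).mul
          (measurable_snd.sub (measurable_const.sub measurable_fst))).add
          (measurable_snd.mul (measurable_const.sub measurable_snd))).sub
          ((measurable_const.sub measurable_fst).mul measurable_fst))
      simpa using this
    have p2' : ∫ ω, (2 * (N : ℝ) * (1 - P ω) * (R ω - (1 - P ω)) + R ω * (1 - R ω)
          - (1 - P ω) * P ω) ∂μ
        = 0 + (2 * (N : ℝ) - 1) * (∫ ω, (1 - P ω) ∂μ) + 1 * (∫ ω, (1 - R ω) ∂μ)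
          + (1 - 2 * (N : ℝ)) * (∫ ω, (1 - P ω) ^ 2 ∂μ) + (-1) * (∫ ω, (1 - R ω) ^ 2 ∂μ)
          + (-(2 * (N : ℝ))) * (∫ ω, (1 - P ω) * (1 - R ω) ∂μ) :=
      hcanon _ 0 (2 * (N : ℝ) - 1) 1 (1 - 2 * (N : ℝ)) (-1) (-(2 * (N : ℝ))) (fun ω => by ring)
    have p3 : ∫ ω, ((N : ℝ) ^ 2 * (1 - P ω) ^ 2 + (N : ℝ) * (1 - P ω) * P ω) ∂μ
        = 0 + (N : ℝ) * (∫ ω, (1 - P ω) ∂μ) + 0 * (∫ ω, (1 - R ω) ∂μ)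
          + ((N : ℝ) ^ 2 - (N : ℝ)) * (∫ ω, (1 - P ω) ^ 2 ∂μ)
          + 0 * (∫ ω, (1 - R ω) ^ 2 ∂μ) + 0 * (∫ ω, (1 - P ω) * (1 - R ω) ∂μ) :=
      hcanon _ 0 (N : ℝ) 0 ((N : ℝ) ^ 2 - (N : ℝ)) 0 0 (fun ω => by ring)
    have hIB12 : Integrable (fun ω => (Y₀ ω : ℝ) ^ 2 * (R ω - (1 - P ω)) ^ 2
        + (Y₀ ω : ℝ) * (2 * (N : ℝ) * (1 - P ω) * (R ω - (1 - P ω)) + R ω * (1 - R ω)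
          - (1 - P ω) * P ω)) μ := hIB1.add hIB2
    have hsum1 : ∫ ω, ((Y₀ ω : ℝ) ^ 2 * (R ω - (1 - P ω)) ^ 2
          + (Y₀ ω : ℝ) * (2 * (N : ℝ) * (1 - P ω) * (R ω - (1 - P ω)) + R ω * (1 - R ω)
            - (1 - P ω) * P ω)
          + ((N : ℝ) ^ 2 * (1 - P ω) ^ 2 + (N : ℝ) * (1 - P ω) * P ω)) ∂μ
        = (∫ ω, ((Y₀ ω : ℝ) ^ 2 * (R ω - (1 - P ω)) ^ 2
            + (Y₀ ω : ℝ) * (2 * (N : ℝ) * (1 - P ω) * (R ω - (1 - P ω)) + R ω * (1 - R ω)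
              - (1 - P ω) * P ω)) ∂μ)
          + ∫ ω, ((N : ℝ) ^ 2 * (1 - P ω) ^ 2 + (N : ℝ) * (1 - P ω) * P ω) ∂μ :=
      integral_add hIB12 hIB3
    have hsum2 : ∫ ω, ((Y₀ ω : ℝ) ^ 2 * (R ω - (1 - P ω)) ^ 2
          + (Y₀ ω : ℝ) * (2 * (N : ℝ) * (1 - P ω) * (R ω - (1 - P ω)) + R ω * (1 - R ω)
            - (1 - P ω) * P ω)) ∂μ
        = (∫ ω, (Y₀ ω : ℝ) ^ 2 * (R ω - (1 - P ω)) ^ 2 ∂μ)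
          + ∫ ω, (Y₀ ω : ℝ) * (2 * (N : ℝ) * (1 - P ω) * (R ω - (1 - P ω)) + R ω * (1 - R ω)
            - (1 - P ω) * P ω) ∂μ := integral_add hIB1 hIB2
    rw [h3, hsum1, hsum2, p1, p1', p2, p2', p3] at h2
    linear_combination h2
  -- positivity
  have keypos : ∀ f : Ω → ℝ, Integrable f μ → (∀ᵐ ω ∂μ, 0 < f ω) → 0 < ∫ ω, f ω ∂μ := by
    intro f hfi hfpos
    rw [integral_pos_iff_support_of_nonneg_ae (hfpos.mono fun ω h => h.le) hfi]
    have h0 : μ (Function.support f)ᶜ = 0 := by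
      have h1 : ∀ᵐ ω ∂μ, ω ∈ Function.support f :=
        hfpos.mono fun ω h => Function.mem_support.mpr h.ne'
      rw [ae_iff] at h1
      exact h1
    have h2 := measure_union_le (μ := μ) (Function.support f) (Function.support f)ᶜ
    rw [Set.union_compl_self, measure_univ, h0, add_zero] at h2
    exact lt_of_lt_of_le zero_lt_one h2
  have hcInt : Integrable (fun ω => ((1 - P ω) + (1 - R ω) - 1) ^ 2) μ := by
    refine hint _ 1 ((((measurable_const.sub hP).add (measurable_const.sub hR)).sub
      measurable_const).pow measurable_const) ?_
    filter_upwards [hae] with ω h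
    rw [abs_le]
    constructor
    · nlinarith [h.1, h.2.1, h.2.2.1, h.2.2.2]
    · nlinarith [h.1, h.2.1, h.2.2.1, h.2.2.2]
  have hpos1 : 0 < 1 - ∫ ω, ((1 - P ω) + (1 - R ω) - 1) ^ 2 ∂μ := by
    have he : 1 - ∫ ω, ((1 - P ω) + (1 - R ω) - 1) ^ 2 ∂μ
        = ∫ ω, (1 - ((1 - P ω) + (1 - R ω) - 1) ^ 2) ∂μ := by
      rw [integral_sub (integrable_const 1) hcInt, integral_const]
      simp
    rw [he]
    have hIone : Integrable (fun ω => 1 - ((1 - P ω) + (1 - R ω) - 1) ^ 2) μ :=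
      (integrable_const 1).sub hcInt
    refine keypos _ hIone ?_
    filter_upwards [hae] with ω h
    nlinarith [h.1, h.2.1, h.2.2.1, h.2.2.2]
  have hposa : 0 < ∫ ω, (1 - P ω) ∂μ :=
    keypos _ h1P (by filter_upwards [hae] with ω h; linarith [h.2.1])
  have hposb : 0 < ∫ ω, (1 - R ω) ∂μ :=
    keypos _ h1R (by filter_upwards [hae] with ω h; linarith [h.2.2.2])
  have hpos2 : 0 < (∫ ω, (1 - P ω) ∂μ) + ∫ ω, (1 - R ω) ∂μ := by linarith
  -- expansion of E[(P̄+R̄-1)²]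
  have hcexp : ∫ ω, ((1 - P ω) + (1 - R ω) - 1) ^ 2 ∂μ
      = 1 + (-2) * (∫ ω, (1 - P ω) ∂μ) + (-2) * (∫ ω, (1 - R ω) ∂μ)
        + 1 * (∫ ω, (1 - P ω) ^ 2 ∂μ) + 1 * (∫ ω, (1 - R ω) ^ 2 ∂μ)
        + 2 * (∫ ω, (1 - P ω) * (1 - R ω) ∂μ) :=
    hcanon _ 1 (-2) (-2) 1 1 2 (fun ω => by ring)
  -- variance
  have hmem : MemLp (fun ω => (Y₀ ω : ℝ)) 2 μ :=
    MemLp.of_bound (hmeasY fun k => (k : ℝ)).aestronglyMeasurable (N : ℝ)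
      (Filter.Eventually.of_forall fun ω => by rw [Real.norm_eq_abs]; exact hYcast ω)
  refine ⟨hpos1, hpos2, ?_⟩
  rw [variance_eq_sub hmem]
  have hX2 : ∫ ω, ((fun ω => (Y₀ ω : ℝ)) ^ 2) ω ∂μ = ∫ ω, (Y₀ ω : ℝ) ^ 2 ∂μ :=
    integral_congr_ae (Filter.Eventually.of_forall fun ω => by simp [Pi.pow_apply])
  rw [hX2]
  set a := ∫ ω, (1 - P ω) ∂μ
  set b := ∫ ω, (1 - R ω) ∂μ
  set A := ∫ ω, (1 - P ω) ^ 2 ∂μ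
  set B := ∫ ω, (1 - R ω) ^ 2 ∂μ
  set D := ∫ ω, (1 - P ω) * (1 - R ω) ∂μ
  set c := ∫ ω, ((1 - P ω) + (1 - R ω) - 1) ^ 2 ∂μ
  set m1 := ∫ ω, (Y₀ ω : ℝ) ∂μ
  set S := ∫ ω, (Y₀ ω : ℝ) ^ 2 ∂μ
  have hm1' : m1 = (N : ℝ) * a / (a + b) := by
    rw [eq_div_iff hpos2.ne']
    linear_combination hE1
  have hS' : S = (m1 * (0 + (2 * (N : ℝ) - 1) * a + 1 * b + (1 - 2 * (N : ℝ)) * A + (-1) * B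
      + (-(2 * (N : ℝ))) * D) + (0 + (N : ℝ) * a + 0 * b + ((N : ℝ) ^ 2 - (N : ℝ)) * A
      + 0 * B + 0 * D)) / (1 - c) := by
    rw [eq_div_iff hpos1.ne']
    linear_combination hE2
  have hcexp' : c = 1 - 2 * a - 2 * b + A + B + 2 * D := by linear_combination hcexp
  rw [hS', hm1', hcexp']
  rw [hcexp'] at hpos1
  have hne1 : (1 : ℝ) - (1 - 2 * a - 2 * b + A + B + 2 * D) ≠ 0 := hpos1.ne'
  have hne2 : a + b ≠ 0 := hpos2.ne'
  generalize hK : (1 : ℝ) - (1 - 2 * a - 2 * b + A + B + 2 * D) = K at hne1 ⊢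
  field_simp
  rw [← hK]
  ring
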